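/- Let N_F be the n-bit Fibonacci NLFSR with feedback functions f_{n-1} = x_0 + g_{n-1} + g_{n-2}|_{+1} + g_{n-3}|_{+2} + … + g_τ|_{+n-1-τ} and f_i = x_{i+1} for i < n-1, and let N_G be the uniform Galois NLFSR with terminal bit τ (0 ≤ τ < n-1) and feedback functions f_i = x_{(i+1) mod n} + g_i for τ ≤ i ≤ n-1 and f_i = x_{i+1} for i < τ, where each g_i depends only on variables with indices in {0,…,τ} and does not involve x_0 for i < n-1 (so that all intermediate shiftings preserve uniformity). If N_F is initialized to s = (s_0,…,s_{n-1}) and N_G is initialized to the state (s_0,…,s_τ, r_{τ+1},…,r_{n-1}) with r_i = s_i + g_{i-1}(s) + g_{i-2}|_{+1}(s) + … + g_τ|_{+i-τ-1}(s) for each i ∈ {τ+1,…,n-1}, then N_F and N_G generate the same output sequence: for all t ≥ 0 the 0th bits of the t-th states coincide. -/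

import Mathlib

/-- The state correspondence from Fibonacci states to Galois states. -/
def Phi (n τ : ℕ) [NeZero n] (g : ℕ → (Fin n → ZMod 2) → ZMod 2) (v : Fin n → ZMod 2) :
    Fin n → ZMod 2 :=
  fun i => if (i : ℕ) ≤ τ then v i
    else v i + ∑ j ∈ Finset.Icc τ ((i : ℕ) - 1),
      g j (fun k => v (k + (Fin.ofNat n ((i : ℕ) - 1 - j))))

/-- Theorem 2: the Fibonacci NLFSR `N_F` started at `s` and the equivalent uniform
Galois NLFSR `N_G` (terminal bit `τ`) started at the matching state `r`
(`r i = s i + Σ_{j=τ}^{i-1} g_j|_{+(i-1-j)}(s)` for `i > τ`) generate the same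
output sequence. `g|_{+m}(s) = g (fun k => s (k + m))`. -/
theorem stmt2 (n : ℕ) [NeZero n] (hn : 2 ≤ n) (τ : ℕ) (hτ : τ < n - 1)
    (g : ℕ → (Fin n → ZMod 2) → ZMod 2)
    -- each g_i depends only on variables with index ≤ τ
    (hg : ∀ (i : ℕ) (s s' : Fin n → ZMod 2),
      (∀ k : Fin n, (k : ℕ) ≤ τ → s k = s' k) → g i s = g i s')
    -- and g_i for i < n-1 does not involve x_0
    (hg0 : ∀ (i : ℕ), i < n - 1 → ∀ s s' : Fin n → ZMod 2,
      (∀ k : Fin n, 1 ≤ (k : ℕ) → s k = s' k) → g i s = g i s')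
    (F_F F_G : (Fin n → ZMod 2) → (Fin n → ZMod 2))
    -- Fibonacci: f_{n-1} = x_0 + g_{n-1} + g_{n-2}|_{+1} + … + g_τ|_{+n-1-τ},  f_i = x_{i+1}
    (hFF : ∀ s (i : Fin n), F_F s i =
      if (i : ℕ) = n - 1 then
        s 0 + ∑ j ∈ Finset.Icc τ (n - 1), g j (fun k => s (k + (Fin.ofNat n (n - 1 - j))))
      else s (i + 1))
    -- Galois: f_i = x_{(i+1) mod n} + g_i for τ ≤ i,  f_i = x_{i+1} for i < τ
    (hFG : ∀ s (i : Fin n), F_G s i =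
      if τ ≤ (i : ℕ) then s (i + 1) + g (i : ℕ) s else s (i + 1))
    (s r : Fin n → ZMod 2)
    (hr1 : ∀ i : Fin n, (i : ℕ) ≤ τ → r i = s i)
    (hr2 : ∀ i : Fin n, τ < (i : ℕ) →
      r i = s i + ∑ j ∈ Finset.Icc τ ((i : ℕ) - 1),
        g j (fun k => s (k + (Fin.ofNat n ((i : ℕ) - 1 - j))))) :
    ∀ t : ℕ, (F_F^[t] s) 0 = (F_G^[t] r) 0 := by
  obtain ⟨N, rfl⟩ : ∃ N, n = N + 1 := ⟨n - 1, by omega⟩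
  simp only [Nat.add_sub_cancel] at hτ hg0 hFF
  have hN : τ < N := hτ
  have hchar : ∀ a b : ZMod 2, a + b + b = a := by decide
  have hchar2 : ∀ a b c : ZMod 2, a + (b + c) + c = a + b := by decide
  have hchar3 : ∀ a b c : ZMod 2, a + (b + c) + b = a + c := by decide
  -- value of a sum inside Fin (N+1)
  have valadd : ∀ (k : Fin (N + 1)) (m : ℕ), k.val + m < N + 1 →
      ((k + (Fin.ofNat (N + 1) m)) : Fin (N + 1)).val = k.val + m := by
    intro k m h
    have hm : m < N + 1 := lt_of_le_of_lt (Nat.le_add_left _ _) h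
    rw [Fin.val_add, Fin.val_ofNat, Nat.mod_eq_of_lt hm, Nat.mod_eq_of_lt h]
  -- combined congruence for g j with j < N : only indices in [1, τ] matter
  have gcong : ∀ (j : ℕ) (a b : Fin (N + 1) → ZMod 2), j < N →
      (∀ k : Fin (N + 1), 1 ≤ (k : ℕ) → (k : ℕ) ≤ τ → a k = b k) → g j a = g j b := by
    intro j a b hj hab
    have h1 : g j a = g j (fun k => if (k : ℕ) ≤ τ then a k else b k) :=
      hg j _ _ (fun k hk => by simp [hk])
    have h2 : g j (fun k => if (k : ℕ) ≤ τ then a k else b k) = g j b := by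
      refine hg0 j hj _ _ (fun k hk => ?_)
      by_cases hkτ : (k : ℕ) ≤ τ
      · simp only [hkτ, if_true]; exact hab k hk hkτ
      · simp [hkτ]
    rw [h1, h2]
  -- g j only sees indices ≤ τ, where Phi is the identity
  have hgPhi : ∀ (j : ℕ) (v : Fin (N + 1) → ZMod 2),
      g j (Phi (N + 1) τ g v) = g j v := by
    intro j v
    exact hg j _ _ (fun k hk => by simp [Phi, hk])
  have hPhi0 : ∀ v : Fin (N + 1) → ZMod 2, Phi (N + 1) τ g v 0 = v 0 := by
    intro v
    simp [Phi]
  have hshift0 : ∀ (j : ℕ) (v : Fin (N + 1) → ZMod 2),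
      g j (fun k => v (k + (Fin.ofNat (N + 1) 0))) = g j v := by
    intro j v
    congr 1; funext k; simp
  -- shifting through F_F : g j (shift_m (F_F v)) = g j (shift_{m+1} v)
  have shiftF : ∀ (v : Fin (N + 1) → ZMod 2) (j m : ℕ), j < N → τ + m + 1 ≤ N →
      g j (fun k => F_F v (k + (Fin.ofNat (N + 1) m)))
        = g j (fun k => v (k + (Fin.ofNat (N + 1) (m + 1)))) := by
    intro v j m hj hm
    refine gcong j _ _ hj (fun k hk1 hk2 => ?_)
    have hkm : ((k + (Fin.ofNat (N + 1) m)) : Fin (N + 1)).val = k.val + m :=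
      valadd k m (by omega)
    have hne : (((k + (Fin.ofNat (N + 1) m)) : Fin (N + 1)) : ℕ) ≠ N := by
      rw [hkm]; omega
    rw [hFF, if_neg hne]
    congr 1
    apply Fin.ext
    have h2 : (((k + (Fin.ofNat (N + 1) m)) + 1) : Fin (N + 1)).val = k.val + m + 1 := by
      rw [Fin.val_add_one_of_lt (by rw [Fin.lt_def, Fin.val_last, hkm]; omega), hkm]
    have h3 : ((k + (Fin.ofNat (N + 1) (m + 1))) : Fin (N + 1)).val = k.val + (m + 1) :=
      valadd k (m + 1) (by omega)
    omega
  -- the key commutation: Phi ∘ F_F = F_G ∘ Phi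
  have key : ∀ v : Fin (N + 1) → ZMod 2,
      Phi (N + 1) τ g (F_F v) = F_G (Phi (N + 1) τ g v) := by
    intro v
    funext i
    rw [hFG]
    rcases lt_trichotomy (i : ℕ) τ with hi | hi | hi
    · -- i < τ
      have hiτ : (i : ℕ) ≤ τ := le_of_lt hi
      have hi1 : ((i + 1 : Fin (N + 1)) : ℕ) = (i : ℕ) + 1 :=
        Fin.val_add_one_of_lt (by rw [Fin.lt_def, Fin.val_last]; omega)
      rw [if_neg (by omega)]
      simp only [Phi]
      rw [if_pos hiτ, if_pos (by omega : ((i + 1 : Fin (N + 1)) : ℕ) ≤ τ)]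
      rw [hFF, if_neg (by omega : (i : ℕ) ≠ N)]
    · -- i = τ
      have hiτ : (i : ℕ) ≤ τ := le_of_eq hi
      have hi1 : ((i + 1 : Fin (N + 1)) : ℕ) = (i : ℕ) + 1 :=
        Fin.val_add_one_of_lt (by rw [Fin.lt_def, Fin.val_last]; omega)
      rw [if_pos (le_of_eq hi.symm)]
      simp only [Phi]
      rw [if_pos hiτ, if_neg (by omega : ¬ ((i + 1 : Fin (N + 1)) : ℕ) ≤ τ)]
      rw [hFF, if_neg (by omega : (i : ℕ) ≠ N)]
      have hIcc : Finset.Icc τ (((i + 1 : Fin (N + 1)) : ℕ) - 1) = {τ} := by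
        rw [hi1, Nat.add_sub_cancel, ← hi, Finset.Icc_self]
      rw [hIcc, Finset.sum_singleton]
      have hz : (((i + 1 : Fin (N + 1)) : ℕ) - 1 - τ : ℕ) = 0 := by
        rw [hi1]; omega
      rw [hz, hshift0, hgPhi, hi, hchar]
    · -- τ < i
      have hiτ : ¬ (i : ℕ) ≤ τ := by omega
      by_cases hlast : (i : ℕ) = N
      · -- i = N (last index)
        have hi0 : (i + 1 : Fin (N + 1)) = 0 := by
          have : i = Fin.last N := Fin.ext (by rw [Fin.val_last]; exact hlast)
          rw [this, Fin.last_add_one]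
        rw [if_pos (by omega), hi0, hPhi0, hgPhi, hlast]
        simp only [Phi]
        rw [if_neg hiτ, hFF, if_pos hlast, hlast]
        have hsumL : ∑ j ∈ Finset.Icc τ (N - 1),
            g j (fun k => F_F v (k + (Fin.ofNat (N + 1) (N - 1 - j))))
            = ∑ j ∈ Finset.Icc τ (N - 1),
            g j (fun k => v (k + (Fin.ofNat (N + 1) (N - j)))) := by
          refine Finset.sum_congr rfl (fun j hj => ?_)
          rw [Finset.mem_Icc] at hj
          have h1 : (N - 1 - j) + 1 = N - j := by omega
          rw [← h1]
          exact shiftF v j (N - 1 - j) (by omega) (by omega)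
        rw [hsumL]
        have hsplit : ∑ j ∈ Finset.Icc τ N,
            g j (fun k => v (k + (Fin.ofNat (N + 1) (N - j))))
            = (∑ j ∈ Finset.Icc τ (N - 1),
                g j (fun k => v (k + (Fin.ofNat (N + 1) (N - j)))))
              + g N (fun k => v (k + (Fin.ofNat (N + 1) (N - N)))) := by
          have h := Finset.sum_Icc_succ_top (a := τ) (b := N - 1) (by omega)
            (f := fun j => g j (fun k => v (k + (Fin.ofNat (N + 1) (N - j)))))
          rw [show N - 1 + 1 = N from by omega] at h
          exact h
        rw [hsplit, Nat.sub_self, hshift0, hchar3]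
      · -- τ < i < N
        have hival : (i : ℕ) < N := lt_of_le_of_ne (Fin.is_le i) hlast
        have hi1 : ((i + 1 : Fin (N + 1)) : ℕ) = (i : ℕ) + 1 :=
          Fin.val_add_one_of_lt (by rw [Fin.lt_def, Fin.val_last]; omega)
        rw [if_pos (by omega)]
        simp only [Phi]
        rw [if_neg hiτ, if_neg (by omega : ¬ ((i + 1 : Fin (N + 1)) : ℕ) ≤ τ), hgPhi]
        rw [hFF, if_neg (by omega : (i : ℕ) ≠ N)]
        have hsumL : ∑ j ∈ Finset.Icc τ ((i : ℕ) - 1),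
            g j (fun k => F_F v (k + (Fin.ofNat (N + 1) ((i : ℕ) - 1 - j))))
            = ∑ j ∈ Finset.Icc τ ((i : ℕ) - 1),
            g j (fun k => v (k + (Fin.ofNat (N + 1) ((i : ℕ) - j)))) := by
          refine Finset.sum_congr rfl (fun j hj => ?_)
          rw [Finset.mem_Icc] at hj
          have h1 : ((i : ℕ) - 1 - j) + 1 = (i : ℕ) - j := by omega
          rw [← h1]
          exact shiftF v j ((i : ℕ) - 1 - j) (by omega) (by omega)
        rw [hsumL]
        have hIcc2 : (((i + 1 : Fin (N + 1)) : ℕ) - 1) = ((i : ℕ) - 1) + 1 := by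
          rw [hi1]; omega
        rw [hIcc2, Finset.sum_Icc_succ_top (by omega)]
        have hj0 : ((i : ℕ) - 1 + 1 : ℕ) = (i : ℕ) := by omega
        rw [hj0]
        rw [Nat.sub_self, hshift0, hchar2]
  -- induction
  have main : ∀ t : ℕ, F_G^[t] (Phi (N + 1) τ g s) = Phi (N + 1) τ g (F_F^[t] s) := by
    intro t
    induction t with
    | zero => rfl
    | succ t ih =>
        rw [Function.iterate_succ_apply', Function.iterate_succ_apply', ih, key]
  have hr : r = Phi (N + 1) τ g s := by
    funext i
    by_cases h : (i : ℕ) ≤ τ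
    · rw [hr1 i h]; simp [Phi, h]
    · rw [hr2 i (by omega)]; simp [Phi, h]
  intro t
  rw [hr, main t, hPhi0]
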